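/- Let f ≥ 2 and let T = SL(2, GF(2^f)). For every non-identity element x of T, the centralizer C_T(x) is an abelian (commutative) subgroup of T. -/

import Mathlib

/-- Any 2×2 matrix commuting with a non-scalar matrix `x` is a linear
combination of `1` and `x`. -/
lemma commute_mem_span_of_not_scalar {K : Type*} [Field K]
    (x a : Matrix (Fin 2) (Fin 2) K)
    (hx : ∀ c : K, x ≠ c • 1) (h : x * a = a * x) :
    ∃ α β : K, a = α • 1 + β • x := by
  have h00 := congrFun (congrFun h 0) 0
  have h01 := congrFun (congrFun h 0) 1
  have h10 := congrFun (congrFun h 1) 0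
  have h11 := congrFun (congrFun h 1) 1
  simp only [Matrix.mul_apply, Fin.sum_univ_two] at h00 h01 h10 h11
  by_cases hq : x 0 1 ≠ 0
  · refine ⟨a 0 0 - (a 0 1 / x 0 1) * x 0 0, a 0 1 / x 0 1, ?_⟩
    ext i j
    fin_cases i <;> fin_cases j <;>
      simp only [Matrix.add_apply, Matrix.smul_apply, Matrix.one_apply, smul_eq_mul,
        Fin.mk_zero, Fin.mk_one, if_true, if_false, Fin.zero_eq_one_iff, Fin.one_eq_zero_iff,
        Nat.succ_ne_self, mul_zero, add_zero, zero_add, mul_one] <;>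
      field_simp
    · linear_combination
    · linear_combination h00
    · linear_combination h01
  · push_neg at hq
    by_cases hr : x 1 0 ≠ 0
    · refine ⟨a 0 0 - (a 1 0 / x 1 0) * x 0 0, a 1 0 / x 1 0, ?_⟩
      ext i j
      fin_cases i <;> fin_cases j <;>
        simp only [Matrix.add_apply, Matrix.smul_apply, Matrix.one_apply, smul_eq_mul,
          Fin.mk_zero, Fin.mk_one, if_true, if_false, Fin.zero_eq_one_iff, Fin.one_eq_zero_iff,
          Nat.succ_ne_self, mul_zero, add_zero, zero_add, mul_one] <;>
        field_simp
      · linear_combination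
      · linear_combination -h00
      · linear_combination -h10
    · push_neg at hr
      have hps : x 0 0 ≠ x 1 1 := by
        intro hps
        apply hx (x 0 0)
        ext i j
        fin_cases i <;> fin_cases j <;>
          simp [Matrix.one_apply, hq, hr, hps]
      have hd : x 0 0 - x 1 1 ≠ 0 := sub_ne_zero.mpr hps
      have ha01 : a 0 1 = 0 := by
        have h' : a 0 1 * (x 0 0 - x 1 1) = 0 := by
          rw [hq] at h01; linear_combination h01
        rcases mul_eq_zero.mp h' with h' | h'
        · exact h'
        · exact absurd h' hd
      have ha10 : a 1 0 = 0 := by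
        have h' : a 1 0 * (x 1 1 - x 0 0) = 0 := by
          rw [hr] at h10; linear_combination h10
        rcases mul_eq_zero.mp h' with h' | h'
        · exact h'
        · exact absurd h' (fun hh => hd (by linear_combination -hh))
      refine ⟨a 0 0 - ((a 0 0 - a 1 1) / (x 0 0 - x 1 1)) * x 0 0,
        (a 0 0 - a 1 1) / (x 0 0 - x 1 1), ?_⟩
      ext i j
      fin_cases i <;> fin_cases j <;>
        simp only [Matrix.add_apply, Matrix.smul_apply, Matrix.one_apply, smul_eq_mul,
          Fin.mk_zero, Fin.mk_one, if_true, if_false, Fin.zero_eq_one_iff, Fin.one_eq_zero_iff,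
          Nat.succ_ne_self, mul_zero, add_zero, zero_add, mul_one, hq, hr, ha01, ha10] <;>
        field_simp <;> ring

lemma span_comm {K : Type*} [Field K] (x : Matrix (Fin 2) (Fin 2) K) (α β γ δ : K) :
    (α • 1 + β • x) * (γ • 1 + δ • x) = (γ • 1 + δ • x) * (α • 1 + β • x) := by
  simp only [add_mul, mul_add, smul_mul_assoc, mul_smul_comm, smul_smul, smul_add, one_mul,
    mul_one]
  rw [mul_comm γ α, mul_comm γ β, mul_comm δ α, mul_comm δ β]
  abel

/-- For `f ≥ 2` and `T = SL(2, GF(2^f))` (identified with `PSL(2, 2^f)` since the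
center is trivial), the centralizer of every non-identity element of `T` is abelian. -/
theorem centralizer_abelian_SL2
    (f : ℕ) (hf : 2 ≤ f)
    (x : Matrix.SpecialLinearGroup (Fin 2) (GaloisField 2 f)) (hx : x ≠ 1) :
    ∀ a ∈ Subgroup.centralizer ({x} : Set (Matrix.SpecialLinearGroup (Fin 2) (GaloisField 2 f))),
      ∀ b ∈ Subgroup.centralizer ({x} : Set (Matrix.SpecialLinearGroup (Fin 2) (GaloisField 2 f))),
        a * b = b * a := by
  intro a ha b hb
  have hxs : ∀ c : GaloisField 2 f, (x : Matrix (Fin 2) (Fin 2) (GaloisField 2 f)) ≠ c • 1 := by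
    intro c hc
    have hdet : ((x : Matrix (Fin 2) (Fin 2) (GaloisField 2 f))).det = 1 := x.prop
    rw [hc] at hdet
    simp [Matrix.det_smul, Fintype.card_fin] at hdet
    have hc1 : c = 1 := by
      have h2 : c * c = 1 := by rw [← sq]; simpa using hdet
      rcases mul_self_eq_one_iff.mp h2 with h | h
      · exact h
      · rw [h]; exact (CharTwo.neg_eq 1)
    apply hx
    apply Subtype.ext
    rw [hc, hc1]
    simp
  have hax : (x : Matrix (Fin 2) (Fin 2) (GaloisField 2 f)) * a = a * x := by
    have h' := Subgroup.mem_centralizer_iff.mp ha x rfl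
    have := congrArg (fun g : Matrix.SpecialLinearGroup (Fin 2) (GaloisField 2 f) =>
      (g : Matrix (Fin 2) (Fin 2) (GaloisField 2 f))) h'
    simpa using this
  have hbx : (x : Matrix (Fin 2) (Fin 2) (GaloisField 2 f)) * b = b * x := by
    have h' := Subgroup.mem_centralizer_iff.mp hb x rfl
    have := congrArg (fun g : Matrix.SpecialLinearGroup (Fin 2) (GaloisField 2 f) =>
      (g : Matrix (Fin 2) (Fin 2) (GaloisField 2 f))) h'
    simpa using this
  obtain ⟨α, β, hA⟩ := commute_mem_span_of_not_scalar _ _ hxs hax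
  obtain ⟨γ, δ, hB⟩ := commute_mem_span_of_not_scalar _ _ hxs hbx
  apply Subtype.ext
  show ((a * b : Matrix.SpecialLinearGroup (Fin 2) (GaloisField 2 f)) :
      Matrix (Fin 2) (Fin 2) (GaloisField 2 f)) = ((b * a : _) : _)
  rw [Matrix.SpecialLinearGroup.coe_mul, Matrix.SpecialLinearGroup.coe_mul, hA, hB, span_comm]
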